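/- Let P and P′ be quartiles and let i, j ∈ {1,2,3} with i ≠ j. If P′_i ≤ P_i (in the tile order), then the tiles P′_j and P_j are disjoint. In particular, if T is an i-tree then the tiles {P_j : P ∈ T} are pairwise disjoint for each j ≠ i. -/
import Mathlib


open MeasureTheory Set

/-- The Walsh functions `w_l : ℝ → ℝ`, defined recursively by
`w_0 = χ_{[0,1)}`, `w_{2l}(x) = w_l(2x) + w_l(2x−1)`,
`w_{2l+1}(x) = w_l(2x) − w_l(2x−1)`. -/
noncomputable def walsh : ℕ → ℝ → ℝ
  | 0, x => if x ∈ Set.Ico (0:ℝ) 1 then 1 else 0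
  | (n+1), x =>
      if (n+1) % 2 = 0 then walsh ((n+1)/2) (2*x) + walsh ((n+1)/2) (2*x - 1)
      else walsh ((n+1)/2) (2*x) - walsh ((n+1)/2) (2*x - 1)
  decreasing_by all_goals exact Nat.div_lt_self (Nat.succ_pos n) one_lt_two

/-- A tile `[2^{-k}n, 2^{-k}(n+1)) × [2^k l, 2^k(l+1))`:
a half-open dyadic rectangle of area one. -/
structure Tile where
  k : ℤ
  n : ℤ
  l : ℤ
deriving DecidableEq

namespace Tile

/-- The time interval `I_P = [2^{-k}n, 2^{-k}(n+1))` of a tile. -/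
noncomputable def I (p : Tile) : Set ℝ := Set.Ico ((2:ℝ)^(-p.k) * p.n) ((2:ℝ)^(-p.k) * (p.n+1))

/-- The frequency interval `ω_P = [2^k l, 2^k(l+1))` of a tile. -/
noncomputable def freq (p : Tile) : Set ℝ := Set.Ico ((2:ℝ)^(p.k) * p.l) ((2:ℝ)^(p.k) * (p.l+1))

/-- The tile as a subset `I_P × ω_P` of the time-frequency plane. -/
noncomputable def area (p : Tile) : Set (ℝ × ℝ) := p.I ×ˢ p.freq

/-- The length `|I_P| = 2^{-k}` of the time interval of a tile. -/
noncomputable def len (p : Tile) : ℝ := (2:ℝ)^(-p.k)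

/-- The center `ξ_P` of the frequency interval of a tile. -/
noncomputable def ξ (p : Tile) : ℝ := (2:ℝ)^(p.k) * ((p.l : ℝ) + 1/2)

/-- The tile order: `p < q` iff `I_p ⊊ I_q` and `ω_q ⊆ ω_p`. -/
def lt (p q : Tile) : Prop := p.I ⊂ q.I ∧ q.freq ⊆ p.freq

/-- `p ≤ q` iff `p < q` or `p = q`. -/
def le (p q : Tile) : Prop := Tile.lt p q ∨ p = q

/-- The Walsh wave packet `φ_P(x) = 2^{k/2} w_l(2^k x − n)` of a tile. -/
noncomputable def wp (p : Tile) : ℝ → ℝ :=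
  fun x => Real.sqrt ((2:ℝ)^(p.k)) * walsh p.l.toNat ((2:ℝ)^(p.k) * x - p.n)

end Tile

/-- A quartile `[2^{-k}n, 2^{-k}(n+1)) × [2^{k+2}l, 2^{k+2}(l+1))`:
a dyadic rectangle of area four. -/
structure Quartile where
  k : ℤ
  n : ℤ
  l : ℤ
deriving DecidableEq

namespace Quartile

/-- The time interval `I_P` of a quartile. -/
noncomputable def I (P : Quartile) : Set ℝ := Set.Ico ((2:ℝ)^(-P.k) * P.n) ((2:ℝ)^(-P.k) * (P.n+1))

/-- The length `|I_P| = 2^{-k}` of the time interval of a quartile. -/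
noncomputable def len (P : Quartile) : ℝ := (2:ℝ)^(-P.k)

/-- The `j`-th sub-tile `P_j = I_P × [2^k(4l+j−1), 2^k(4l+j))` of a quartile,
for `j = 1, 2, 3`. -/
def tile (P : Quartile) (j : ℕ) : Tile := ⟨P.k, P.n, 4*P.l + ((j - 1 : ℕ) : ℤ)⟩

end Quartile

/-- `T` is an `i`-tree with top `top`: `P_i ≤ top_i` for all `P ∈ T`. -/
def IsTree (i : ℕ) (top : Quartile) (T : Finset Quartile) : Prop :=
  ∀ P ∈ T, Tile.le (P.tile i) (top.tile i)

/-- `size_j((a_P)_{P∈Ps})`: the sup over trees `T ⊆ Ps` which are `i`-trees for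
some `i ≠ j` of `(|I_T|⁻¹ Σ_{P∈T} |a_{P_j}|²)^{1/2}`. -/
noncomputable def size (Ps : Finset Quartile) (j : ℕ) (a : Quartile → ℂ) : ℝ :=
  sSup ((fun p : Quartile × Finset Quartile =>
      Real.sqrt ((∑ P ∈ p.2, ‖a P‖^2) / p.1.len)) ''
    {p | p.2 ⊆ Ps ∧ ∃ i ∈ ({1,2,3} : Set ℕ), i ≠ j ∧ IsTree i p.1 p.2})

/-- `energy_j((a_P)_{P∈Ps})`: the sup over subsets `D ⊆ Ps` with
`{P_j : P ∈ D}` pairwise disjoint of `(Σ_{P∈D} |a_{P_j}|²)^{1/2}`. -/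
noncomputable def energy (Ps : Finset Quartile) (j : ℕ) (a : Quartile → ℂ) : ℝ :=
  sSup ((fun D : Finset Quartile => Real.sqrt (∑ P ∈ D, ‖a P‖^2)) ''
    {D | D ⊆ Ps ∧ ∀ P ∈ D, ∀ P' ∈ D, P ≠ P' →
      Disjoint (P.tile j).area (P'.tile j).area})

/-- The `L^{1,∞}(I)` quasinorm `sup_{λ>0} λ |{x ∈ I : |g(x)| > λ}|`. -/
noncomputable def weakL1 (g : ℝ → ℝ) (I : Set ℝ) : ℝ :=
  sSup {r | ∃ lam : ℝ, 0 < lam ∧ r = lam * (volume {x ∈ I | lam < |g x|}).toReal}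

/-- The square function `(Σ_{P∈T} |a_{P_j}|² χ_{I_P}/|I_P|)^{1/2}` of a tree. -/
noncomputable def treeFn (T : Finset Quartile) (a : Quartile → ℂ) : ℝ → ℝ :=
  fun x => Real.sqrt (∑ P ∈ T, ‖a P‖^2 * (P.I.indicator (fun _ => (1:ℝ)) x) / P.len)

lemma keyInt (M l l' c c' : ℤ) (hM : ∃ M₂, M = 2*M₂) (hM2 : 2 ≤ M)
    (hcc : (c=0∧c'=1)∨(c=0∧c'=2)∨(c=1∧c'=0)∨(c=1∧c'=2)∨(c=2∧c'=0)∨(c=2∧c'=1))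
    (h1 : M * (4*l' + c) < 4*l + c + 1)
    (h2 : 4*l + c < M * (4*l' + c + 1))
    (h3 : M * (4*l' + c') < 4*l + c' + 1)
    (h4 : 4*l + c' < M * (4*l' + c' + 1)) : False := by
  have e1 : M * (4*l' + c) = 4*(M*l') + c*M := by ring
  have e2 : M * (4*l' + c + 1) = 4*(M*l') + c*M + M := by ring
  have e3 : M * (4*l' + c') = 4*(M*l') + c'*M := by ring
  have e4 : M * (4*l' + c' + 1) = 4*(M*l') + c'*M + M := by ring
  rw [e1] at h1; rw [e2] at h2; rw [e3] at h3; rw [e4] at h4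
  generalize M*l' = w at h1 h2 h3 h4
  obtain ⟨M₂, rfl⟩ := hM
  rcases hcc with ⟨rfl,rfl⟩|⟨rfl,rfl⟩|⟨rfl,rfl⟩|⟨rfl,rfl⟩|⟨rfl,rfl⟩|⟨rfl,rfl⟩ <;> omega

lemma core (P P' : Quartile) (i j : ℕ)
    (hi : i = 1 ∨ i = 2 ∨ i = 3) (hj : j = 1 ∨ j = 2 ∨ j = 3) (hij : i ≠ j)
    (hk : P.k < P'.k)
    (z : ℝ) (hz : z ∈ (P.tile i).freq) (hz' : z ∈ (P'.tile i).freq)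
    (y : ℝ) (hy : y ∈ (P.tile j).freq) (hy' : y ∈ (P'.tile j).freq) : False := by
  simp only [Tile.freq, Quartile.tile, Set.mem_Ico] at hz hz' hy hy'
  set ci : ℤ := ((i-1 : ℕ) : ℤ) with hci
  set cj : ℤ := ((j-1 : ℕ) : ℤ) with hcj
  have hcc : (ci=0∧cj=1)∨(ci=0∧cj=2)∨(ci=1∧cj=0)∨(ci=1∧cj=2)∨(ci=2∧cj=0)∨(ci=2∧cj=1) := by
    rcases hi with rfl|rfl|rfl <;> rcases hj with rfl|rfl|rfl <;>
      simp_all [hci, hcj]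
  set m : ℕ := (P'.k - P.k).toNat with hm
  have hm1 : 1 ≤ m := by omega
  have hk' : P'.k = P.k + (m:ℤ) := by omega
  set M : ℤ := 2^m with hM
  have hM2 : (2:ℤ) ≤ M := by
    calc (2:ℤ) = 2^1 := rfl
    _ ≤ 2^m := pow_le_pow_right₀ (by norm_num) (by omega)
  have hMe : ∃ M₂, M = 2*M₂ := by
    have : (2:ℤ) ∣ M := hM ▸ dvd_pow_self 2 (by omega : m ≠ 0)
    exact this
  have hME : (2:ℝ)^P'.k = (2:ℝ)^P.k * (M:ℝ) := by
    rw [hk', zpow_add₀ (by norm_num : (2:ℝ) ≠ 0)]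
    congr 1
    rw [hM]
    push_cast
    rw [zpow_natCast]
  have hpos : (0:ℝ) < (2:ℝ)^P.k := zpow_pos (by norm_num) _
  have conv1 : ∀ u v : ℤ, (2:ℝ)^P'.k * (u:ℝ) < (2:ℝ)^P.k * (v:ℝ) → M * u < v := by
    intro u v h
    rw [hME, mul_assoc] at h
    have := (mul_lt_mul_iff_right₀ hpos).mp h
    exact_mod_cast this
  have conv2 : ∀ u v : ℤ, (2:ℝ)^P.k * (u:ℝ) < (2:ℝ)^P'.k * (v:ℝ) → u < M * v := by
    intro u v h
    rw [hME, mul_assoc] at h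
    have := (mul_lt_mul_iff_right₀ hpos).mp h
    exact_mod_cast this
  have h1 : M * (4*P'.l + ci) < 4*P.l + ci + 1 := by
    apply conv1
    push_cast
    push_cast at hz hz'
    linarith [hz.1, hz.2, hz'.1]
  have h2 : 4*P.l + ci < M * (4*P'.l + ci + 1) := by
    apply conv2
    push_cast
    push_cast at hz hz'
    linarith [hz.1, hz'.2]
  have h3 : M * (4*P'.l + cj) < 4*P.l + cj + 1 := by
    apply conv1
    push_cast
    push_cast at hy hy'
    linarith [hy'.1, hy.2]
  have h4 : 4*P.l + cj < M * (4*P'.l + cj + 1) := by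
    apply conv2
    push_cast
    push_cast at hy hy'
    linarith [hy.1, hy'.2]
  exact keyInt M P.l P'.l ci cj hMe hM2 hcc h1 h2 h3 h4

lemma dyadic_same {k a b : ℤ} {x : ℝ}
    (h1 : (2:ℝ)^k * (a:ℝ) ≤ x) (h2 : x < (2:ℝ)^k * ((a:ℝ)+1))
    (h3 : (2:ℝ)^k * (b:ℝ) ≤ x) (h4 : x < (2:ℝ)^k * ((b:ℝ)+1)) : a = b := by
  have hpos : (0:ℝ) < (2:ℝ)^k := zpow_pos (by norm_num) _
  have e1 : (a:ℝ) < (b:ℝ)+1 := lt_of_mul_lt_mul_left (h1.trans_lt h4) hpos.le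
  have e2 : (b:ℝ) < (a:ℝ)+1 := lt_of_mul_lt_mul_left (h3.trans_lt h2) hpos.le
  have f1 : a < b+1 := by exact_mod_cast e1
  have f2 : b < a+1 := by exact_mod_cast e2
  omega

lemma dyadic_ssubset {k k' n n' : ℤ}
    (h : Set.Ico ((2:ℝ)^(-k') * (n':ℝ)) ((2:ℝ)^(-k') * ((n':ℝ)+1)) ⊂
         Set.Ico ((2:ℝ)^(-k) * (n:ℝ)) ((2:ℝ)^(-k) * ((n:ℝ)+1))) : k < k' := by
  have hpos' : (0:ℝ) < (2:ℝ)^(-k') := zpow_pos (by norm_num) _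
  have hpos : (0:ℝ) < (2:ℝ)^(-k) := zpow_pos (by norm_num) _
  have hne : (2:ℝ)^(-k') * (n':ℝ) < (2:ℝ)^(-k') * ((n':ℝ)+1) := by nlinarith
  have hsub := h.subset
  rw [Set.Ico_subset_Ico_iff hne] at hsub
  obtain ⟨h1, h2⟩ := hsub
  have hlen : (2:ℝ)^(-k') ≤ (2:ℝ)^(-k) := by nlinarith
  have hkk : k ≤ k' := by
    have := (zpow_le_zpow_iff_right₀ (by norm_num : (1:ℝ) < 2)).mp hlen
    omega
  rcases lt_or_eq_of_le hkk with hlt | hEq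
  · exact hlt
  · exfalso
    subst hEq
    have e1 : (n:ℝ) ≤ (n':ℝ) := le_of_mul_le_mul_left h1 hpos
    have e2 : ((n':ℝ)+1) ≤ ((n:ℝ)+1) := le_of_mul_le_mul_left h2 hpos
    have : n = n' := by
      have : (n:ℝ) = (n':ℝ) := le_antisymm e1 (by linarith)
      exact_mod_cast this
    subst this
    exact h.ne rfl

lemma freq_lower_mem (Q : Quartile) (i : ℕ) :
    (2:ℝ)^Q.k * (((Q.tile i).l : ℤ) : ℝ) ∈ (Q.tile i).freq := by
  simp only [Tile.freq, Quartile.tile, Set.mem_Ico]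
  constructor
  · exact le_refl _
  · have hpos : (0:ℝ) < (2:ℝ)^Q.k := zpow_pos (by norm_num) _
    nlinarith

lemma tile_inj (P P' : Quartile) (i : ℕ) (h : P.tile i = P'.tile i) : P = P' := by
  simp only [Quartile.tile, Tile.mk.injEq] at h
  obtain ⟨h1, h2, h3⟩ := h
  cases P; cases P'
  simp_all

lemma part1 (P P' : Quartile) (i j : ℕ)
    (hi : i = 1 ∨ i = 2 ∨ i = 3) (hj : j = 1 ∨ j = 2 ∨ j = 3)
    (hij : i ≠ j) (hPP : P ≠ P')
    (hle : Tile.le (P'.tile i) (P.tile i)) :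
    Disjoint ((P'.tile j).area) ((P.tile j).area) := by
  rcases hle with hlt | heq
  · obtain ⟨hI, hω⟩ := hlt
    have hk : P.k < P'.k := by
      simp only [Tile.I, Quartile.tile] at hI
      exact dyadic_ssubset hI
    have hz := freq_lower_mem P i
    have hz' := hω hz
    rw [Set.disjoint_left]
    rintro ⟨x, y⟩ hxy hxy'
    simp only [Tile.area, Set.mem_prod] at hxy hxy'
    exact core P P' i j hi hj hij hk _ hz hz' y hxy'.2 hxy.2
  · exact absurd (tile_inj P' P i heq) (Ne.symm hPP)

/-- if `P'_i ≤ P_i` for distinct quartiles `P ≠ P'` and `i ≠ j`,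
then the tiles `P'_j` and `P_j` are disjoint; in particular, for an `i`-tree
`T`, the tiles `{P_j : P ∈ T}` are pairwise disjoint for each `j ≠ i`. -/
theorem lacunar :
    (∀ (P P' : Quartile) (i j : ℕ), i ∈ ({1,2,3} : Set ℕ) → j ∈ ({1,2,3} : Set ℕ) →
      i ≠ j → P ≠ P' → Tile.le (P'.tile i) (P.tile i) →
      Disjoint ((P'.tile j).area) ((P.tile j).area)) ∧
    (∀ (i j : ℕ), i ∈ ({1,2,3} : Set ℕ) → j ∈ ({1,2,3} : Set ℕ) → i ≠ j →
      ∀ (top : Quartile) (T : Finset Quartile), IsTree i top T →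
      ∀ P ∈ T, ∀ P' ∈ T, P ≠ P' →
        Disjoint ((P.tile j).area) ((P'.tile j).area)) := by
  constructor
  · intro P P' i j hi hj hij hPP hle
    simp only [Set.mem_insert_iff, Set.mem_singleton_iff] at hi hj
    exact part1 P P' i j hi hj hij hPP hle
  · intro i j hi hj hij top T hT P hP P' hP' hPP
    simp only [Set.mem_insert_iff, Set.mem_singleton_iff] at hi hj
    rcases hT P hP with hlt | heq
    · rcases hT P' hP' with hlt' | heq'
      · -- both strict below top
        have hk : top.k < P.k := by
          have h := hlt.1
          simp only [Tile.I, Quartile.tile] at h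
          exact dyadic_ssubset h
        have hk' : top.k < P'.k := by
          have h := hlt'.1
          simp only [Tile.I, Quartile.tile] at h
          exact dyadic_ssubset h
        have hztop := freq_lower_mem top i
        have hz := hlt.2 hztop
        have hz' := hlt'.2 hztop
        rcases lt_trichotomy P.k P'.k with h | h | h
        · rw [Set.disjoint_left]
          rintro ⟨x, y⟩ hxy hxy'
          simp only [Tile.area, Set.mem_prod] at hxy hxy'
          exact core P P' i j hi hj hij h _ hz hz' y hxy.2 hxy'.2
        · -- equal scales
          have hl : P.l = P'.l := by
            simp only [Tile.freq, Quartile.tile, Set.mem_Ico] at hz hz'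
            rw [← h] at hz'
            have := dyadic_same hz.1 hz.2 hz'.1 hz'.2
            omega
          have hn : P.n ≠ P'.n := by
            intro hn
            exact hPP (by cases P; cases P'; simp_all)
          rw [Set.disjoint_left]
          rintro ⟨x, y⟩ hxy hxy'
          simp only [Tile.area, Set.mem_prod] at hxy hxy'
          have hx := hxy.1
          have hx' := hxy'.1
          simp only [Tile.I, Quartile.tile, Set.mem_Ico] at hx hx'
          rw [← h] at hx'
          exact hn (dyadic_same hx.1 hx.2 hx'.1 hx'.2)
        · rw [Set.disjoint_left]
          rintro ⟨x, y⟩ hxy hxy'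
          simp only [Tile.area, Set.mem_prod] at hxy hxy'
          exact core P' P i j hi hj hij h _ hz' hz y hxy'.2 hxy.2
      · -- P'.tile i = top.tile i
        have hle : Tile.le (P.tile i) (P'.tile i) := Or.inl (by rw [heq']; exact hlt)
        exact part1 P' P i j hi hj hij (Ne.symm hPP) hle
    · rcases hT P' hP' with hlt' | heq'
      · have hle : Tile.le (P'.tile i) (P.tile i) := Or.inl (by rw [heq]; exact hlt')
        exact (part1 P P' i j hi hj hij hPP hle).symm
      · exact absurd (tile_inj P P' i (heq.trans heq'.symm)) hPP
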